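/- Let ε_B, ε_1, n, A > 0 and P ∈ (0,1). The function η(N) = A·P^(N/n)·N/(ε_B·N + ε_1) is strictly quasiconcave on (0, ∞); that is, for all x, y > 0 with x ≠ y and every λ ∈ (0,1), η(λx + (1−λ)y) > min(η(x), η(y)). -/

import Mathlib

open Real

theorem stmt_2 (εB ε1 n A : ℝ) (hεB : 0 < εB) (hε1 : 0 < ε1) (hn : 0 < n) (hA : 0 < A)
    (P : ℝ) (hP : P ∈ Set.Ioo (0:ℝ) 1)
    (η : ℝ → ℝ) (hη : ∀ N, η N = A * P ^ (N / n) * N / (εB * N + ε1)) :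
    ∀ x ∈ Set.Ioi (0:ℝ), ∀ y ∈ Set.Ioi (0:ℝ), x ≠ y →
      ∀ t ∈ Set.Ioo (0:ℝ) 1, min (η x) (η y) < η (t * x + (1 - t) * y) := by
  intro x hx y hy hxy t ht
  rw [Set.mem_Ioi] at hx hy
  obtain ⟨ht0, ht1⟩ := ht
  have hPpos := hP.1
  set c : ℝ := Real.log P / n with hc
  set f : ℝ → ℝ := fun N => c * N + Real.log N - Real.log (εB * N + ε1) with hfdef
  -- rewrite η
  have key : ∀ N : ℝ, 0 < N → η N = A * Real.exp (f N) := by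
    intro N hN
    have h1 : (0:ℝ) < εB * N + ε1 := by positivity
    rw [hη, hfdef]
    simp only
    rw [Real.exp_sub, Real.exp_add, Real.exp_log hN, Real.exp_log h1,
      Real.rpow_def_of_pos hPpos]
    rw [hc]
    field_simp
  -- first derivative
  have hderiv : ∀ z : ℝ, 0 < z →
      HasDerivAt f (c + z⁻¹ - εB * (εB * z + ε1)⁻¹) z := by
    intro z hz
    have hz0 : z ≠ 0 := ne_of_gt hz
    have h1 : (0:ℝ) < εB * z + ε1 := by positivity
    have d1 : HasDerivAt (fun N : ℝ => c * N) c z := by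
      simpa using (hasDerivAt_id z).const_mul c
    have d2 : HasDerivAt Real.log z⁻¹ z := Real.hasDerivAt_log hz0
    have dinner : HasDerivAt (fun N : ℝ => εB * N + ε1) εB z := by
      simpa using ((hasDerivAt_id z).const_mul εB).add_const ε1
    have d3 : HasDerivAt (fun N : ℝ => Real.log (εB * N + ε1))
        (εB * (εB * z + ε1)⁻¹) z := by
      have := (Real.hasDerivAt_log (ne_of_gt h1)).comp z dinner
      exact this.congr_deriv (mul_comm _ _)
    exact (d1.add d2).sub d3
  have hcont : ContinuousOn f (Set.Ioi 0) := fun z hz =>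
    ((hderiv z hz).continuousAt).continuousWithinAt
  -- second derivative
  have hderiv2 : ∀ z : ℝ, 0 < z → deriv^[2] f z < 0 := by
    intro z hz
    have hz0 : z ≠ 0 := ne_of_gt hz
    have h1 : (0:ℝ) < εB * z + ε1 := by positivity
    have heq : deriv f =ᶠ[nhds z] fun w => c + w⁻¹ - εB * (εB * w + ε1)⁻¹ := by
      filter_upwards [Ioi_mem_nhds hz] with w hw
      exact (hderiv w hw).deriv
    have dinner : HasDerivAt (fun w : ℝ => εB * w + ε1) εB z := by
      simpa using ((hasDerivAt_id z).const_mul εB).add_const ε1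
    have dinv : HasDerivAt (fun w : ℝ => (εB * w + ε1)⁻¹)
        (-εB / (εB * z + ε1) ^ 2) z := by
      exact dinner.inv (ne_of_gt h1)
    have dg : HasDerivAt (fun w : ℝ => c + w⁻¹ - εB * (εB * w + ε1)⁻¹)
        (-(z ^ 2)⁻¹ - εB * (-εB / (εB * z + ε1) ^ 2)) z := by
      have := ((hasDerivAt_const z c).add (hasDerivAt_inv hz0)).sub (dinv.const_mul εB)
      exact this.congr_deriv (by ring)
    have h2 : deriv^[2] f z = -(z ^ 2)⁻¹ - εB * (-εB / (εB * z + ε1) ^ 2) := by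
      simp only [Function.iterate_succ, Function.iterate_zero, Function.comp_apply, id]
      rw [Filter.EventuallyEq.deriv_eq heq]
      exact dg.deriv
    rw [h2]
    have hzsq : (0:ℝ) < z ^ 2 := by positivity
    have hssq : (0:ℝ) < (εB * z + ε1) ^ 2 := by positivity
    have h3 : εB ^ 2 / (εB * z + ε1) ^ 2 < 1 / z ^ 2 := by
      rw [div_lt_div_iff₀ hssq hzsq]
      nlinarith [mul_pos (mul_pos hεB hz) hε1, mul_pos hε1 hε1]
    have e : -(z ^ 2)⁻¹ - εB * (-εB / (εB * z + ε1) ^ 2)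
        = εB ^ 2 / (εB * z + ε1) ^ 2 - 1 / z ^ 2 := by
      field_simp
      ring
    rw [e]
    linarith
  have hconc : StrictConcaveOn ℝ (Set.Ioi 0) f := by
    apply strictConcaveOn_of_deriv2_neg (convex_Ioi 0) hcont
    intro z hz
    rw [interior_Ioi] at hz
    exact hderiv2 z hz
  have hmid : 0 < t * x + (1 - t) * y := by
    have h1 := mul_pos ht0 hx
    have h2 := mul_pos (by linarith : (0:ℝ) < 1 - t) hy
    linarith
  have hfmid : min (f x) (f y) < f (t * x + (1 - t) * y) := by
    have h := hconc.2 (Set.mem_Ioi.2 hx) (Set.mem_Ioi.2 hy) hxy ht0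
      (show (0:ℝ) < 1 - t by linarith) (by ring)
    simp only [smul_eq_mul] at h
    have hminx : min (f x) (f y) ≤ f x := min_le_left _ _
    have hminy : min (f x) (f y) ≤ f y := min_le_right _ _
    nlinarith
  rw [key x hx, key y hy, key _ hmid]
  rcases le_total (f x) (f y) with h | h
  · rw [min_eq_left h] at hfmid
    have hle : A * Real.exp (f x) ≤ A * Real.exp (f y) :=
      mul_le_mul_of_nonneg_left (Real.exp_le_exp.2 h) hA.le
    rw [min_eq_left hle]
    exact mul_lt_mul_of_pos_left (Real.exp_lt_exp.2 hfmid) hA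
  · rw [min_eq_right h] at hfmid
    have hle : A * Real.exp (f y) ≤ A * Real.exp (f x) :=
      mul_le_mul_of_nonneg_left (Real.exp_le_exp.2 h) hA.le
    rw [min_eq_right hle]
    exact mul_lt_mul_of_pos_left (Real.exp_lt_exp.2 hfmid) hA
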